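/- Let X be a reflexive real Banach space, let F ⊆ X be a nonempty closed bounded convex set, and let Ω_1, …, Ω_n ⊆ X be nonempty closed convex sets at least one of which is bounded. If inf_{x ∈ X} T(x) < ∞ for T(x) := Σ_{i=1}^n T^F_{Ω_i}(x), then there exists x̄ ∈ X with T(x̄) = inf_{x ∈ X} T(x), i.e., the generalized Fermat–Torricelli problem of minimizing T over X admits an optimal solution. -/

import Mathlib

/-- The minimal time function `T^F_Ω(x) := inf{t ≥ 0 : Ω ∩ (x + tF) ≠ ∅}`,
with values in the extended reals (`sInf ∅ = ⊤`). -/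
noncomputable def minTime {X : Type*} [AddCommGroup X] [Module ℝ X]
    (F Ω : Set X) (x : X) : EReal :=
  sInf {r : EReal | ∃ t : ℝ, 0 ≤ t ∧ r = (t : EReal) ∧ ∃ f ∈ F, x + t • f ∈ Ω}

open Metric Set NormedSpace Pointwise

section Aux

variable {X : Type*} [NormedAddCommGroup X] [NormedSpace ℝ X]

/-- A set of `X`, regarded as a subset of `X` with the weak topology. -/
def wk (C : Set X) : Set (WeakSpace ℝ X) := C

/-- The identity, from `X` with the weak topology to `X`. -/
def unwk : WeakSpace ℝ X → X := id

lemma wk_mem {C : Set X} {x : WeakSpace ℝ X} : x ∈ wk C ↔ unwk x ∈ C := Iff.rfl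

instance : ContinuousSMul ℝ (WeakSpace ℝ X) :=
  inferInstanceAs (ContinuousSMul ℝ (WeakBilin (topDualPairing ℝ X).flip))

/-- Mazur: a closed convex set is weakly closed. -/
lemma mazur {C : Set X} (hconv : Convex ℝ C) (hcl : IsClosed C) :
    IsClosed (wk C) := by
  rw [← isOpen_compl_iff, isOpen_iff_mem_nhds]
  intro x hx
  obtain ⟨f, u, hfu, hux⟩ := geometric_hahn_banach_closed_point hconv hcl hx
  have hcont : Continuous fun y : WeakSpace ℝ X => f y :=
    WeakBilin.eval_continuous (topDualPairing ℝ X).flip f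
  refine Filter.mem_of_superset ((isOpen_lt continuous_const hcont).mem_nhds hux) ?_
  intro y hy hyC
  exact absurd (hfu y hyC) (not_lt.2 hy.le)

/-- In a reflexive space, closed balls are weakly compact. -/
lemma wk_ball_compact [CompleteSpace X]
    (hrefl : Function.Surjective (inclusionInDoubleDual ℝ X)) (R : ℝ) :
    IsCompact (wk (closedBall (0:X) R)) := by
  set ι := inclusionInDoubleDualLi ℝ (E := X) with hι
  have hcoe : ∀ x : X, ι x = inclusionInDoubleDual ℝ X x := fun _ => rfl
  have hsurj : Function.Surjective ι := by
    intro y; obtain ⟨x, hx⟩ := hrefl y; exact ⟨x, by rw [hcoe]; exact hx⟩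
  set j0 : StrongDual ℝ (StrongDual ℝ X) → X := Function.surjInv hsurj with hj0
  have hιj0 : ∀ ψ, ι (j0 ψ) = ψ := fun ψ => Function.surjInv_eq hsurj ψ
  set j : WeakDual ℝ (StrongDual ℝ X) → WeakSpace ℝ X :=
    fun ψ => j0 (WeakDual.toStrongDual ψ) with hj
  have hcontj : Continuous j := by
    apply WeakBilin.continuous_of_continuous_eval
    intro φ
    have heq : (fun ψ : WeakDual ℝ (StrongDual ℝ X) => (topDualPairing ℝ X).flip (j ψ) φ)
        = fun ψ : WeakDual ℝ (StrongDual ℝ X) => ψ φ := by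
      funext ψ
      show φ (j0 (WeakDual.toStrongDual ψ)) = ψ φ
      have h1 : ι (j0 (WeakDual.toStrongDual ψ)) = WeakDual.toStrongDual ψ := hιj0 _
      have h2 := congrFun (congrArg DFunLike.coe h1) φ
      rw [hcoe] at h2
      simpa using h2
    rw [heq]
    exact WeakBilin.eval_continuous _ φ
  have hset : wk (closedBall (0:X) R)
      = j '' (WeakDual.toStrongDual ⁻¹' closedBall 0 R) := by
    ext x
    rw [wk_mem]
    constructor
    · intro hx
      refine ⟨WeakDual.toStrongDual.symm (ι (unwk x)), ?_, ?_⟩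
      · simp only [Set.mem_preimage, LinearEquiv.apply_symm_apply, mem_closedBall_zero_iff]
        refine (mem_closedBall_zero_iff (E := StrongDual ℝ (StrongDual ℝ X))).mpr ?_
        rw [ι.norm_map]
        simpa [mem_closedBall_zero_iff] using hx
      · show j0 (WeakDual.toStrongDual (WeakDual.toStrongDual.symm (ι (unwk x)))) = x
        rw [LinearEquiv.apply_symm_apply]
        exact ι.injective (hιj0 (ι (unwk x)))
    · rintro ⟨ψ, hψ, rfl⟩
      simp only [Set.mem_preimage, mem_closedBall_zero_iff] at hψ
      show unwk (j ψ) ∈ closedBall 0 R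
      have : ‖unwk (j ψ)‖ = ‖WeakDual.toStrongDual ψ‖ := by
        rw [← ι.norm_map (unwk (j ψ))]
        congr 1
        exact hιj0 _
      rw [mem_closedBall_zero_iff, this]
      exact (mem_closedBall_zero_iff (E := StrongDual ℝ (StrongDual ℝ X))).mp hψ
  rw [hset]
  exact (WeakDual.isCompact_closedBall (𝕜 := ℝ) (E := StrongDual ℝ X) 0 R).image hcontj

/-- `[0,s] • F`. -/
def Dset (F : Set X) (s : ℝ) : Set X := (fun p : ℝ × X => p.1 • p.2) '' (Icc 0 s ×ˢ F)

lemma wk_Dset_compact [CompleteSpace X]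
    (hrefl : Function.Surjective (inclusionInDoubleDual ℝ X))
    {F : Set X} (hFcl : IsClosed F) (hFbd : Bornology.IsBounded F) (hFconv : Convex ℝ F)
    (s : ℝ) : IsCompact (wk (Dset F s)) := by
  obtain ⟨R, hR⟩ := hFbd.subset_closedBall 0
  have hFc : IsCompact (wk F) :=
    (wk_ball_compact hrefl R).of_isClosed_subset (mazur hFconv hFcl) hR
  have : wk (Dset F s)
      = (fun p : ℝ × WeakSpace ℝ X => p.1 • p.2) '' (Icc 0 s ×ˢ wk F) := rfl
  rw [this]
  exact (isCompact_Icc.prod hFc).image continuous_smul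

lemma minTime_nonneg (F Ω : Set X) (x : X) : 0 ≤ minTime F Ω x := by
  refine le_sInf ?_
  rintro r ⟨t, ht0, rfl, -⟩
  exact_mod_cast ht0

lemma sublevel_eq (F Ω : Set X) (a : ℝ) :
    {x : X | minTime F Ω x ≤ (a : EReal)}
      = ⋂ k : ℕ, (-(Dset F (a + 1/(k+1))) + Ω) := by
  ext x
  simp only [Set.mem_setOf_eq, Set.mem_iInter]
  constructor
  · intro hx k
    have hpos : (0:ℝ) < 1/(k+1) := by positivity
    have hlt : minTime F Ω x < ((a + 1/(k+1) : ℝ) : EReal) := by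
      refine lt_of_le_of_lt hx ?_
      exact_mod_cast lt_add_of_pos_right a hpos
    rw [minTime] at hlt
    obtain ⟨r, hrS, hrlt⟩ := sInf_lt_iff.mp hlt
    obtain ⟨t, ht0, rfl, f, hfF, hmem⟩ := hrS
    have htlt : t < a + 1/(k+1) := by exact_mod_cast hrlt
    refine Set.mem_add.mpr ⟨-(t • f), ?_, x + t • f, hmem, by abel⟩
    rw [Set.mem_neg, neg_neg]
    exact ⟨(t, f), ⟨⟨ht0, htlt.le⟩, hfF⟩, rfl⟩
  · intro hx
    by_contra h
    push_neg at h
    obtain ⟨z, haz, hzT⟩ := EReal.exists_between_coe_real h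
    have haz' : a < z := by exact_mod_cast haz
    obtain ⟨k, hk⟩ := exists_nat_one_div_lt (sub_pos.2 haz')
    obtain ⟨u, hu, ω, hω, huv⟩ := Set.mem_add.mp (hx k)
    rw [Set.mem_neg] at hu
    obtain ⟨⟨t, f⟩, ⟨htIcc, hfF⟩, hp⟩ := hu
    have hxt : x + t • f ∈ Ω := by
      have hxo : x + t • f = ω := by
        rw [← huv]
        have hp' : t • f = -u := hp
        rw [hp']
        abel
      rw [hxo]; exact hω
    have hT : minTime F Ω x ≤ ((t:ℝ) : EReal) :=
      sInf_le ⟨t, htIcc.1, rfl, f, hfF, hxt⟩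
    have h2 : minTime F Ω x ≤ ((a + 1/(k+1) : ℝ) : EReal) := by
      refine hT.trans ?_
      exact_mod_cast htIcc.2
    have hlt2 : ((a + 1/(k+1) : ℝ) : EReal) < ((z:ℝ) : EReal) := by
      exact_mod_cast (by linarith : a + 1/(k+1) < z)
    exact absurd hzT (not_lt.2 ((h2.trans hlt2.le)))

lemma wk_sublevel_closed [CompleteSpace X]
    (hrefl : Function.Surjective (inclusionInDoubleDual ℝ X))
    {F : Set X} (hFcl : IsClosed F) (hFbd : Bornology.IsBounded F) (hFconv : Convex ℝ F)
    {Ω : Set X} (hΩcl : IsClosed Ω) (hΩconv : Convex ℝ Ω) (a : ℝ) :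
    IsClosed (wk {x : X | minTime F Ω x ≤ (a : EReal)}) := by
  rw [show {x : X | minTime F Ω x ≤ (a : EReal)}
      = ⋂ k : ℕ, (-(Dset F (a + 1/(k+1))) + Ω) from sublevel_eq F Ω a]
  have : wk (⋂ k : ℕ, (-(Dset F (a + 1/(k+1))) + Ω))
      = ⋂ k : ℕ, (-(wk (Dset F (a + 1/(k+1)))) + wk Ω) := rfl
  rw [this]
  refine isClosed_iInter fun k => ?_
  exact IsClosed.add_left_of_isCompact (mazur hΩconv hΩcl)
    ((wk_Dset_compact hrefl hFcl hFbd hFconv _).neg)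

lemma wk_minTime_lsc [CompleteSpace X]
    (hrefl : Function.Surjective (inclusionInDoubleDual ℝ X))
    {F : Set X} (hFcl : IsClosed F) (hFbd : Bornology.IsBounded F) (hFconv : Convex ℝ F)
    {Ω : Set X} (hΩcl : IsClosed Ω) (hΩconv : Convex ℝ Ω) :
    LowerSemicontinuous fun x : WeakSpace ℝ X => minTime F Ω (unwk x) := by
  rw [lowerSemicontinuous_iff_isClosed_preimage]
  intro y
  induction y using EReal.rec with
  | bot =>
    have : (fun x : WeakSpace ℝ X => minTime F Ω (unwk x)) ⁻¹' Iic ⊥ = ∅ := by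
      ext x
      simp only [Set.mem_preimage, mem_Iic, le_bot_iff, Set.mem_empty_iff_false, iff_false]
      intro hbot
      have := minTime_nonneg F Ω (unwk x)
      rw [hbot] at this
      have hb0 : (⊥ : EReal) < 0 := by rw [← EReal.coe_zero]; exact EReal.bot_lt_coe 0
      exact absurd this (not_le.2 hb0)
    rw [this]; exact isClosed_empty
  | coe a =>
    have : (fun x : WeakSpace ℝ X => minTime F Ω (unwk x)) ⁻¹' Iic (a : EReal)
        = wk {x : X | minTime F Ω x ≤ (a : EReal)} := rfl
    rw [this]
    exact wk_sublevel_closed hrefl hFcl hFbd hFconv hΩcl hΩconv a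
  | top =>
    have : (fun x : WeakSpace ℝ X => minTime F Ω (unwk x)) ⁻¹' Iic ⊤ = univ := by
      ext x; simp
    rw [this]; exact isClosed_univ

lemma lsc_finset_sum {α : Type*} [TopologicalSpace α] {ι : Type*} (s : Finset ι)
    (f : ι → α → EReal) (h : ∀ i, LowerSemicontinuous (f i)) (h0 : ∀ i x, 0 ≤ f i x) :
    LowerSemicontinuous (fun x => ∑ i ∈ s, f i x) := by
  classical
  induction s using Finset.cons_induction with
  | empty => simpa using lowerSemicontinuous_const
  | cons i s hi ih =>
    have hb0 : (⊥ : EReal) < 0 := by rw [← EReal.coe_zero]; exact EReal.bot_lt_coe 0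
    have hsum0 : ∀ x, 0 ≤ ∑ j ∈ s, f j x := fun x => Finset.sum_nonneg fun j _ => h0 j x
    have := (h i).add' ih (fun x => by
      have h1 : f i x ≠ ⊥ := fun hc => absurd (h0 i x) (by rw [hc]; exact not_le.2 hb0)
      have h2 : (∑ j ∈ s, f j x) ≠ ⊥ :=
        fun hc => absurd (hsum0 x) (by rw [hc]; exact not_le.2 hb0)
      exact EReal.continuousAt_add (Or.inr h2) (Or.inl h1))
    simp only [Finset.sum_cons]
    exact this

end Aux

/-- Existence of optimal solutions to the generalized Fermat–Torricelli problem
with convex targets in a reflexive Banach space (reflexivity is expressed by the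
surjectivity of the canonical embedding into the double dual). -/
theorem stmt_5 {X : Type*} [NormedAddCommGroup X] [NormedSpace ℝ X] [CompleteSpace X]
    (hrefl : Function.Surjective (NormedSpace.inclusionInDoubleDual ℝ X))
    (F : Set X) (hFne : F.Nonempty) (hFcl : IsClosed F)
    (hFbd : Bornology.IsBounded F) (hFconv : Convex ℝ F)
    (n : ℕ) (Ω : Fin n → Set X)
    (hΩne : ∀ i, (Ω i).Nonempty) (hΩcl : ∀ i, IsClosed (Ω i))
    (hΩconv : ∀ i, Convex ℝ (Ω i))
    (hbd : ∃ i, Bornology.IsBounded (Ω i))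
    (hfin : (⨅ x : X, ∑ i, minTime F (Ω i) x) ≠ ⊤) :
    ∃ xb : X, (∑ i, minTime F (Ω i) xb) = ⨅ x : X, ∑ i, minTime F (Ω i) x := by
  classical
  set g : X → EReal := fun x => ∑ i, minTime F (Ω i) x with hg
  have hT0 : ∀ (i : Fin n) (x : X), 0 ≤ minTime F (Ω i) x := fun i x => minTime_nonneg F (Ω i) x
  have hg0 : ∀ x, 0 ≤ g x := fun x => Finset.sum_nonneg fun i _ => hT0 i x
  set m : EReal := ⨅ x : X, g x with hm
  have hfin' : m ≠ ⊤ := hfin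
  have hm0 : 0 ≤ m := le_iInf hg0
  have hb0 : (⊥ : EReal) < 0 := by rw [← EReal.coe_zero]; exact EReal.bot_lt_coe 0
  have hmbot : m ≠ ⊥ := fun hc => absurd hm0 (by rw [hc]; exact not_le.2 hb0)
  set μ : ℝ := m.toReal with hμdef
  have hμ : (μ : EReal) = m := EReal.coe_toReal hfin' hmbot
  have hμ0 : 0 ≤ μ := by
    have h := hm0; rw [← hμ] at h; exact_mod_cast h
  obtain ⟨i0, hΩbd⟩ := hbd
  obtain ⟨CΩ, hCΩ⟩ := isBounded_iff_forall_norm_le.mp hΩbd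
  obtain ⟨MF, hMF⟩ := isBounded_iff_forall_norm_le.mp hFbd
  set MF' : ℝ := max MF 0 with hMF'
  set c : ℝ := μ + 1 with hc
  set R : ℝ := CΩ + (c+1) * MF' with hR
  have key : ∀ x : X, g x ≤ (c : EReal) → x ∈ closedBall (0:X) R := by
    intro x hx
    have h1 : minTime F (Ω i0) x ≤ (c : EReal) :=
      le_trans (Finset.single_le_sum (fun i _ => hT0 i x) (Finset.mem_univ i0)) hx
    have h2 : minTime F (Ω i0) x < ((c+1 : ℝ) : EReal) :=
      lt_of_le_of_lt h1 (by exact_mod_cast lt_add_one c)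
    rw [minTime] at h2
    obtain ⟨r, hrS, hrlt⟩ := sInf_lt_iff.mp h2
    obtain ⟨t, ht0, rfl, f, hfF, hmem⟩ := hrS
    have htc : t < c + 1 := by exact_mod_cast hrlt
    rw [mem_closedBall_zero_iff]
    have hn : ‖x‖ ≤ ‖x + t • f‖ + ‖t • f‖ := by
      calc ‖x‖ = ‖(x + t • f) - t • f‖ := by congr 1; abel
      _ ≤ ‖x + t • f‖ + ‖t • f‖ := norm_sub_le _ _
    refine hn.trans ?_
    have hf' : ‖t • f‖ ≤ (c+1) * MF' := by
      rw [norm_smul, Real.norm_eq_abs, abs_of_nonneg ht0]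
      exact mul_le_mul htc.le ((hMF f hfF).trans (le_max_left _ _)) (norm_nonneg _)
        (by linarith)
    exact add_le_add (hCΩ _ hmem) hf'
  have glsc : LowerSemicontinuous fun x : WeakSpace ℝ X => g (unwk x) :=
    lsc_finset_sum Finset.univ (fun i (x : WeakSpace ℝ X) => minTime F (Ω i) (unwk x))
      (fun i => wk_minTime_lsc hrefl hFcl hFbd hFconv (hΩcl i) (hΩconv i))
      (fun i x => hT0 i (unwk x))
  have subcl : ∀ a : ℝ, IsClosed (wk {x : X | g x ≤ (a : EReal)}) := by
    intro a
    have h : wk {x : X | g x ≤ (a : EReal)}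
        = (fun x : WeakSpace ℝ X => g (unwk x)) ⁻¹' Iic (a : EReal) := rfl
    rw [h]
    exact glsc.isClosed_preimage _
  set A : ℕ → Set (WeakSpace ℝ X) := fun k =>
    wk (closedBall (0:X) R) ∩ wk {x : X | g x ≤ ((μ + 1/(k+1) : ℝ) : EReal)} with hA
  have hAcomp : IsCompact (A 0) := (wk_ball_compact hrefl R).inter_right (subcl _)
  have hAclosed : ∀ k, IsClosed (A k) := fun k =>
    ((mazur (convex_closedBall _ _) Metric.isClosed_closedBall).inter (subcl _))
  have hAsub : ∀ k, A (k+1) ⊆ A k := by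
    intro k x hx
    refine ⟨hx.1, ?_⟩
    have hx2 : g (unwk x) ≤ ((μ + 1/((k+1:ℕ)+1) : ℝ) : EReal) := hx.2
    show g (unwk x) ≤ ((μ + 1/(k+1) : ℝ) : EReal)
    refine le_trans hx2 ?_
    have h1 : (1:ℝ)/((k+1:ℕ)+1) ≤ 1/(k+1) := by
      push_cast
      apply one_div_le_one_div_of_le
      · positivity
      · linarith
    exact_mod_cast (by linarith : μ + 1/((k+1:ℕ)+1) ≤ μ + 1/(k+1))
  have hAne : ∀ k, (A k).Nonempty := by
    intro k
    have hpos : (0:ℝ) < 1/(k+1) := by positivity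
    have hlt : m < ((μ + 1/(k+1) : ℝ) : EReal) := by
      rw [← hμ]; exact_mod_cast lt_add_of_pos_right μ hpos
    rw [hm] at hlt
    obtain ⟨x, hx⟩ := iInf_lt_iff.mp hlt
    have hxle : g x ≤ ((μ + 1/(k+1) : ℝ) : EReal) := hx.le
    refine ⟨x, ?_, hxle⟩
    have hone : (1:ℝ)/(k+1) ≤ 1 := by
      apply div_le_one_of_le₀
      · linarith [Nat.cast_nonneg (α := ℝ) k]
      · positivity
    exact key x (hx.le.trans (by exact_mod_cast (by linarith : μ + 1/(k+1) ≤ c)))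
  obtain ⟨xb, hxb⟩ :=
    IsCompact.nonempty_iInter_of_sequence_nonempty_isCompact_isClosed A hAsub hAne hAcomp hAclosed
  simp only [Set.mem_iInter] at hxb
  have hle : g (unwk xb) ≤ m := by
    by_contra hgt
    push_neg at hgt
    rw [← hμ] at hgt
    obtain ⟨z, haz, hzT⟩ := EReal.exists_between_coe_real hgt
    have haz' : μ < z := by exact_mod_cast haz
    obtain ⟨k, hk⟩ := exists_nat_one_div_lt (sub_pos.2 haz')
    have h2 := (hxb k).2
    have h3 : ((μ + 1/(k+1):ℝ):EReal) < (z:EReal) := by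
      exact_mod_cast (by linarith : μ + 1/(k+1) < z)
    exact absurd hzT (not_lt.2 (h2.trans h3.le))
  exact ⟨unwk xb, le_antisymm hle (iInf_le _ (unwk xb))⟩
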